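/- arXiv:1309.3812 — 2 statements merged into one kernel-verified Lean document; each statement's English description precedes it below -/
import Mathlib

section
/- Let n ≥ 1 and let ℓ be a positive squarefree integer with ℓ ≡ 3 (mod 4), ℓ ≥ 2(n+1)(n+2)/n − 1, and n < (ℓ+1)/4; put d = (ℓ+1)/4. Let R = (ℤ/2ℤ)[X]/(X² + X + d) with ω the class of X (so R ≅ 𝔽₄ if d is odd and R ≅ 𝔽₂ × 𝔽₂ if d is even). If C₁ and C₂ are R-submodules of Rⁿ with swe_{C₁}(A_d, C_d, G_d) = swe_{C₂}(A_d, C_d, G_d) in ℤ[[q]], then swe_{C₁} = swe_{C₂} as polynomials. In other words, for such ℓ and n, the level-ℓ theta function of a length-n code determines its symmetrized weight enumerator uniquely. -/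
set_option synthInstance.maxHeartbeats 400000
set_option maxHeartbeats 800000

noncomputable section

open Polynomial in
/-- The ring `R = (ℤ/2ℤ)[X]/(X² + X + d)`. -/
abbrev Rring (d : ℕ) : Type :=
  Polynomial (ZMod 2) ⧸ Ideal.span {(X : Polynomial (ZMod 2)) ^ 2 + X + C (d : ZMod 2)}

open Polynomial in
/-- `ω`, the class of `X` in `R`. -/
def omg (d : ℕ) : Rring d :=
  Ideal.Quotient.mk (Ideal.span {(X : Polynomial (ZMod 2)) ^ 2 + X + C (d : ZMod 2)}) X

/-- The symmetrized weight enumerator of a code `C ⊆ Rⁿ`: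
`swe_C(X,Y,Z) = ∑_{u ∈ C} X^{#{i : uᵢ = 0}} Y^{#{i : uᵢ = 1}} Z^{#{i : uᵢ ∈ {ω, 1+ω}}}`. -/
def swe {R : Type*} [CommRing R] (n : ℕ) (ω : R) (Co : Set (Fin n → R)) :
    MvPolynomial (Fin 3) ℤ :=
  ∑ i ∈ Finset.range (n + 1), ∑ j ∈ Finset.range (n + 1), ∑ k ∈ Finset.range (n + 1),
    (MvPolynomial.C
      ((Set.ncard {u ∈ Co |
        ({t : Fin n | u t = 0}.ncard = i ∧ {t : Fin n | u t = 1}.ncard = j ∧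
          {t : Fin n | u t = ω ∨ u t = 1 + ω}.ncard = k)}) : ℤ)) *
      (MvPolynomial.X 0 ^ i * MvPolynomial.X 1 ^ j * MvPolynomial.X 2 ^ k)

/-- The positive definite quadratic form `Q_d(x,y) = x² + xy + d y²`. -/
def Qform (d : ℕ) (x y : ℤ) : ℤ := x ^ 2 + x * y + (d : ℤ) * y ^ 2

/-- The coset theta series `θ^{(2,d)}_{a,b}`. -/
def cosetTheta (d : ℕ) (a b : ℤ) : PowerSeries ℤ :=
  PowerSeries.mk fun k =>
    (Set.ncard {mn : ℤ × ℤ |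
      Qform d (2 * mn.1 + a) (2 * mn.2 + b) = (k : ℤ)} : ℤ)

/-- `A_d = θ^{(2,d)}_{0,0}`. -/
def Az (d : ℕ) : PowerSeries ℤ := cosetTheta d 0 0
/-- `C_d = θ^{(2,d)}_{1,0}`. -/
def Cz (d : ℕ) : PowerSeries ℤ := cosetTheta d 1 0
/-- `G_d = θ^{(2,d)}_{0,1}`. -/
def Gz (d : ℕ) : PowerSeries ℤ := cosetTheta d 0 1

open PowerSeries in
lemma coeff_Az_zero (d : ℕ) (hd : 1 ≤ d) : PowerSeries.coeff (R := ℤ) 0 (Az d) = 1 := by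
  have hs : {mn : ℤ × ℤ | Qform d (2 * mn.1 + 0) (2 * mn.2 + 0) = ((0:ℕ) : ℤ)}
      = {((0:ℤ), (0:ℤ))} := by
    ext ⟨m, n⟩
    simp only [Set.mem_setOf_eq, Set.mem_singleton_iff, Prod.mk.injEq, Qform]
    have hd' : (1:ℤ) ≤ (d:ℤ) := by exact_mod_cast hd
    constructor
    · intro h
      push_cast at h
      have h2 : (2*m+n)^2 + (4*(d:ℤ)-1)*n^2 = 0 := by linear_combination h
      have hn2 : n^2 = 0 := by nlinarith [sq_nonneg (2*m+n)]
      have hn : n = 0 := by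
        have := pow_eq_zero_iff (n := 2) (by norm_num) |>.mp hn2
        exact this
      subst hn
      have hm2 : (2*m)^2 = 0 := by linear_combination h2
      constructor
      · nlinarith [sq_nonneg m]
      · rfl
    · rintro ⟨rfl, rfl⟩; ring
  unfold Az cosetTheta
  rw [PowerSeries.coeff_mk, hs]
  simp
lemma coeff_Cz_zero (d : ℕ) (hd : 1 ≤ d) : PowerSeries.coeff (R := ℤ) 0 (Cz d) = 0 := by
  have hs : {mn : ℤ × ℤ | Qform d (2 * mn.1 + 1) (2 * mn.2 + 0) = ((0:ℕ) : ℤ)}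
      = (∅ : Set (ℤ × ℤ)) := by
    ext ⟨m, n⟩
    simp only [Set.mem_setOf_eq, Set.mem_empty_iff_false, iff_false, Qform]
    intro h
    have hd' : (1:ℤ) ≤ (d:ℤ) := by exact_mod_cast hd
    push_cast at h
    have h2 : (2*(2*m+1)+2*n)^2 + (4*(d:ℤ)-1)*(2*n)^2 = 0 := by linear_combination 4*h
    have hn2 : (2*n)^2 = 0 := by nlinarith [sq_nonneg (2*(2*m+1)+2*n)]
    have hx2 : (2*(2*m+1)+2*n)^2 = 0 := by linear_combination h2 - (4*(d:ℤ)-1)*hn2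
    have hn : n = 0 := by nlinarith [sq_nonneg n]
    subst hn
    have h5 : (2*(2*m+1)+2*0) = 0 := by
      have := pow_eq_zero_iff (n := 2) (two_ne_zero) |>.mp hx2
      exact this
    omega
  unfold Cz cosetTheta
  rw [PowerSeries.coeff_mk, hs]
  simp

lemma coeff_Cz_one (d : ℕ) (hd : 1 ≤ d) : PowerSeries.coeff (R := ℤ) 1 (Cz d) = 2 := by
  have hs : {mn : ℤ × ℤ | Qform d (2 * mn.1 + 1) (2 * mn.2 + 0) = ((1:ℕ) : ℤ)}
      = {((0:ℤ), (0:ℤ)), ((-1:ℤ), (0:ℤ))} := by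
    ext ⟨m, n⟩
    simp only [Set.mem_setOf_eq, Set.mem_insert_iff, Set.mem_singleton_iff,
      Prod.mk.injEq, Qform]
    have hd' : (1:ℤ) ≤ (d:ℤ) := by exact_mod_cast hd
    constructor
    · intro h
      push_cast at h
      have h2 : (2*(2*m+1)+2*n)^2 + (4*(d:ℤ)-1)*(2*n)^2 = 4 := by linear_combination 4*h
      have hn : n = 0 := by
        by_contra hn
        have h1 : 1 ≤ n^2 := by rcases lt_or_gt_of_ne hn with h'|h' <;> nlinarith
        nlinarith [sq_nonneg (2*(2*m+1)+2*n)]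
      subst hn
      have h4 : (16:ℤ) * (m * (m+1)) = 0 := by linear_combination h2
      rcases mul_eq_zero.mp h4 with h5 | h5
      · norm_num at h5
      · rcases mul_eq_zero.mp h5 with h6 | h6
        · exact Or.inl ⟨h6, rfl⟩
        · exact Or.inr ⟨by linarith, rfl⟩
    · rintro (⟨rfl, rfl⟩ | ⟨rfl, rfl⟩) <;> push_cast <;> ring
  unfold Cz cosetTheta
  rw [PowerSeries.coeff_mk, hs]
  rw [Set.ncard_pair (by norm_num [Prod.ext_iff] : ((0:ℤ),(0:ℤ)) ≠ ((-1:ℤ),(0:ℤ)))]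
  simp
lemma coeff_Gz_lt (d : ℕ) (hd : 1 ≤ d) (m : ℕ) (hm : m < d) :
    PowerSeries.coeff (R := ℤ) m (Gz d) = 0 := by
  have hs : {mn : ℤ × ℤ | Qform d (2 * mn.1 + 0) (2 * mn.2 + 1) = ((m:ℕ) : ℤ)}
      = (∅ : Set (ℤ × ℤ)) := by
    ext ⟨x, y⟩
    simp only [Set.mem_setOf_eq, Set.mem_empty_iff_false, iff_false, Qform]
    intro h
    have hd' : (1:ℤ) ≤ (d:ℤ) := by exact_mod_cast hd
    have hm' : (m:ℤ) < (d:ℤ) := by exact_mod_cast hm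
    push_cast at h
    have h2 : (2*(2*x)+(2*y+1))^2 + (4*(d:ℤ)-1)*(2*y+1)^2 = 4*(m:ℤ) := by
      linear_combination 4*h
    have hy : (1:ℤ) ≤ (2*y+1)^2 := by
      have : 0 ≤ y*(y+1) := by rcases le_or_gt 0 y with h'|h' <;> nlinarith
      nlinarith
    nlinarith [sq_nonneg (2*(2*x)+(2*y+1))]
  unfold Gz cosetTheta
  rw [PowerSeries.coeff_mk, hs]
  simp

lemma coeff_Gz_d (d : ℕ) (hd : 1 ≤ d) : PowerSeries.coeff (R := ℤ) d (Gz d) = 2 := by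
  have hs : {mn : ℤ × ℤ | Qform d (2 * mn.1 + 0) (2 * mn.2 + 1) = ((d:ℕ) : ℤ)}
      = {((0:ℤ), (0:ℤ)), ((0:ℤ), (-1:ℤ))} := by
    ext ⟨x, y⟩
    simp only [Set.mem_setOf_eq, Set.mem_insert_iff, Set.mem_singleton_iff,
      Prod.mk.injEq, Qform]
    have hd' : (1:ℤ) ≤ (d:ℤ) := by exact_mod_cast hd
    constructor
    · intro h
      push_cast at h
      have h2 : (2*(2*x)+(2*y+1))^2 + (4*(d:ℤ)-1)*(2*y+1)^2 = 4*(d:ℤ) := by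
        linear_combination 4*h
      have hy : y = 0 ∨ y = -1 := by
        by_contra hy
        push_neg at hy
        have h9 : (9:ℤ) ≤ (2*y+1)^2 := by
          rcases le_or_gt 1 y with h'|h'
          · nlinarith
          · have : y ≤ -2 := by omega
            nlinarith
        nlinarith [sq_nonneg (2*(2*x)+(2*y+1))]
      rcases hy with rfl | rfl
      · have h3 : (8:ℤ) * (x * (2*x+1)) = 0 := by linear_combination h2
        rcases mul_eq_zero.mp h3 with h5 | h5
        · norm_num at h5
        · rcases mul_eq_zero.mp h5 with h6 | h6
          · exact Or.inl ⟨h6, rfl⟩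
          · omega
      · have h3 : (8:ℤ) * (x * (2*x-1)) = 0 := by linear_combination h2
        rcases mul_eq_zero.mp h3 with h5 | h5
        · norm_num at h5
        · rcases mul_eq_zero.mp h5 with h6 | h6
          · exact Or.inr ⟨h6, rfl⟩
          · omega
    · rintro (⟨rfl, rfl⟩ | ⟨rfl, rfl⟩) <;> push_cast <;> ring
  unfold Gz cosetTheta
  rw [PowerSeries.coeff_mk, hs]
  rw [Set.ncard_pair (by norm_num [Prod.ext_iff] : ((0:ℤ),(0:ℤ)) ≠ ((0:ℤ),(-1:ℤ)))]
  simp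
open Finset in
lemma key_injective (d n : ℕ) (hd : 1 ≤ d) (hnd : n < d) (c : ℕ → ℕ → ℕ → ℤ)
    (hc0 : ∀ i j k, i + j + k ≠ n → c i j k = 0)
    (hsum : ∑ i ∈ range (n+1), ∑ j ∈ range (n+1), ∑ k ∈ range (n+1),
        (c i j k : PowerSeries ℤ) * (Az d ^ i * Cz d ^ j * Gz d ^ k) = 0) :
    ∀ i j k, c i j k = 0 := by
  obtain ⟨C', hC'⟩ : (PowerSeries.X : PowerSeries ℤ) ∣ Cz d := by
    rw [PowerSeries.X_dvd_iff, ← PowerSeries.coeff_zero_eq_constantCoeff_apply]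
    exact coeff_Cz_zero d hd
  obtain ⟨G', hG'⟩ : (PowerSeries.X : PowerSeries ℤ) ^ d ∣ Gz d := by
    rw [PowerSeries.X_pow_dvd_iff]
    exact fun m hm => coeff_Gz_lt d hd m hm
  have hC0 : PowerSeries.constantCoeff (R := ℤ) C' = 2 := by
    have h1 : (PowerSeries.coeff (R := ℤ) (0+1)) (PowerSeries.X ^ 1 * C') = 2 := by
      rw [pow_one, ← hC']; exact coeff_Cz_one d hd
    rw [PowerSeries.coeff_X_pow_mul, PowerSeries.coeff_zero_eq_constantCoeff_apply] at h1
    exact h1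
  have hG0 : PowerSeries.constantCoeff (R := ℤ) G' = 2 := by
    have h1 : (PowerSeries.coeff (R := ℤ) (0+d)) (PowerSeries.X ^ d * G') = 2 := by
      rw [← hG', zero_add]; exact coeff_Gz_d d hd
    rw [PowerSeries.coeff_X_pow_mul, PowerSeries.coeff_zero_eq_constantCoeff_apply] at h1
    exact h1
  have hA0 : PowerSeries.constantCoeff (R := ℤ) (Az d) = 1 := by
    rw [← PowerSeries.coeff_zero_eq_constantCoeff_apply]; exact coeff_Az_zero d hd
  have hterm : ∀ i j k : ℕ, Az d ^ i * Cz d ^ j * Gz d ^ k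
      = PowerSeries.X ^ (j + d * k) * (Az d ^ i * C' ^ j * G' ^ k) := by
    intro i j k
    rw [hC', hG', mul_pow, mul_pow, ← pow_mul]
    ring
  intro i j k
  by_contra hne
  have hijk : i + j + k = n := by
    by_contra h'; exact hne (hc0 _ _ _ h')
  set S : Finset (ℕ × ℕ) :=
    (range (n+1) ×ˢ range (n+1)).filter
      (fun p => c (n - p.1 - p.2) p.1 p.2 ≠ 0 ∧ p.1 + p.2 ≤ n) with hS
  have hjkS : (j, k) ∈ S := by
    rw [hS, mem_filter, mem_product, mem_range, mem_range]
    refine ⟨⟨by omega, by omega⟩, ?_, by omega⟩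
    have heq : n - j - k = i := by omega
    rw [heq]; exact hne
  obtain ⟨⟨j₀, k₀⟩, hmem, hmin⟩ :=
    S.exists_min_image (fun p => p.1 + d * p.2) ⟨_, hjkS⟩
  rw [hS, mem_filter, mem_product, mem_range, mem_range] at hmem
  obtain ⟨⟨hj₀, hk₀⟩, hc₀, hjk₀⟩ := hmem
  dsimp only at hj₀ hk₀ hc₀ hjk₀ hmin
  set i₀ := n - j₀ - k₀ with hi₀
  set m₀ := j₀ + d * k₀ with hm₀
  have hcoeff : ∀ i j k : ℕ, i < n+1 → j < n+1 → k < n+1 →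
      (PowerSeries.coeff (R := ℤ) m₀) ((c i j k : PowerSeries ℤ) * (Az d ^ i * Cz d ^ j * Gz d ^ k))
      = if i = i₀ ∧ j = j₀ ∧ k = k₀ then c i₀ j₀ k₀ * 2 ^ (j₀ + k₀) else 0 := by
    intro i j k hi hj hk
    by_cases hcz : c i j k = 0
    · rw [hcz]
      split
      · next hh => obtain ⟨rfl, rfl, rfl⟩ := hh; exact absurd hcz hc₀
      · norm_num
    · have hsum' : i + j + k = n := by
        by_contra h'; exact hcz (hc0 _ _ _ h')
      have hjkmem : (j, k) ∈ S := by
        rw [hS, mem_filter, mem_product, mem_range, mem_range]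
        refine ⟨⟨hj, hk⟩, ?_, by omega⟩
        have heq : n - j - k = i := by omega
        rw [heq]; exact hcz
      have hgem : m₀ ≤ j + d * k := hmin _ hjkmem
      by_cases heq : j + d * k = m₀
      · have hkk : k = k₀ := by
          rcases lt_trichotomy k k₀ with hlt | he | hgt
          · have h1 : d * (k+1) ≤ d * k₀ := Nat.mul_le_mul le_rfl (by omega)
            have h2 : d * (k+1) = d*k + d := by ring
            omega
          · exact he
          · have h1 : d * (k₀+1) ≤ d * k := Nat.mul_le_mul le_rfl (by omega)
            have h2 : d * (k₀+1) = d*k₀ + d := by ring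
            omega
        have heq2 := heq
        rw [hkk] at heq2
        have hjj : j = j₀ := by omega
        have hii : i = i₀ := by omega
        rw [if_pos ⟨hii, hjj, hkk⟩]
        have hx : (PowerSeries.coeff (R := ℤ) m₀)
            (PowerSeries.X ^ m₀ * (Az d ^ i₀ * C' ^ j₀ * G' ^ k₀))
            = PowerSeries.constantCoeff (R := ℤ) (Az d ^ i₀ * C' ^ j₀ * G' ^ k₀) := by
          simpa using PowerSeries.coeff_X_pow_mul (Az d ^ i₀ * C' ^ j₀ * G' ^ k₀) m₀ 0
        rw [hterm, heq, hii, hjj, hkk, ← eq_intCast (PowerSeries.C (R := ℤ)) (c i₀ j₀ k₀),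
          PowerSeries.coeff_C_mul, hx,
          map_mul, map_mul, map_pow, map_pow, map_pow, hA0, hC0, hG0]
        push_cast
        ring
      · have hlt : m₀ < j + d * k := lt_of_le_of_ne hgem (fun hh => heq hh.symm)
        rw [if_neg (by rintro ⟨rfl, rfl, rfl⟩; omega)]
        have hdvd : (PowerSeries.X : PowerSeries ℤ) ^ (m₀ + 1) ∣
            (c i j k : PowerSeries ℤ) * (Az d ^ i * Cz d ^ j * Gz d ^ k) := by
          rw [hterm]
          exact Dvd.dvd.mul_left (dvd_mul_of_dvd_left (pow_dvd_pow _ (by omega)) _) _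
        rw [PowerSeries.X_pow_dvd_iff] at hdvd
        exact hdvd m₀ (by omega)
  have h0 : (PowerSeries.coeff (R := ℤ) m₀) (0 : PowerSeries ℤ) = 0 := map_zero _
  rw [← hsum, map_sum] at h0
  simp only [map_sum] at h0
  rw [Finset.sum_congr rfl (fun i hi => Finset.sum_congr rfl (fun j hj =>
    Finset.sum_congr rfl (fun k hk =>
      hcoeff i j k (mem_range.mp hi) (mem_range.mp hj) (mem_range.mp hk))))] at h0
  have hi₀mem : i₀ ∈ range (n+1) := by rw [mem_range]; omega
  have hj₀mem : j₀ ∈ range (n+1) := by rw [mem_range]; omega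
  have hk₀mem : k₀ ∈ range (n+1) := by rw [mem_range]; omega
  rw [Finset.sum_eq_single_of_mem i₀ hi₀mem ?hout1,
    Finset.sum_eq_single_of_mem j₀ hj₀mem ?hout2,
    Finset.sum_eq_single_of_mem k₀ hk₀mem ?hout3] at h0
  case hout1 =>
    intro b _ hb
    rw [Finset.sum_eq_zero]
    intro j' _
    rw [Finset.sum_eq_zero]
    intro k' _
    rw [if_neg (by tauto)]
  case hout2 =>
    intro b _ hb
    rw [Finset.sum_eq_zero]
    intro k' _
    rw [if_neg (by tauto)]
  case hout3 =>
    intro b _ hb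
    rw [if_neg (by tauto)]
  rw [if_pos ⟨rfl, rfl, rfl⟩] at h0
  have hzero : c i₀ j₀ k₀ = 0 := by
    have h2 : (2:ℤ) ^ (j₀ + k₀) ≠ 0 := by positivity
    exact (mul_eq_zero.mp h0).resolve_right h2
  exact hc₀ hzero
open Polynomial in
lemma fpoly_natDegree (d : ℕ) :
    ((X : Polynomial (ZMod 2)) ^ 2 + X + C (d : ZMod 2)).natDegree = 2 := by
  compute_degree!

open Polynomial in
lemma fpoly_monic (d : ℕ) :
    ((X : Polynomial (ZMod 2)) ^ 2 + X + C (d : ZMod 2)).Monic := by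
  unfold Polynomial.Monic
  rw [Polynomial.leadingCoeff, fpoly_natDegree]
  simp [coeff_C, coeff_X]

open Polynomial in
lemma not_dvd_small (d : ℕ) (p : Polynomial (ZMod 2)) (hp : p ≠ 0)
    (hdeg : p.natDegree ≤ 1) :
    ¬ ((X : Polynomial (ZMod 2)) ^ 2 + X + C (d : ZMod 2)) ∣ p := by
  intro hdvd
  have := Polynomial.natDegree_le_of_dvd hdvd hp
  rw [fpoly_natDegree] at this
  omega

open Polynomial in
lemma omg_ne_zero (d : ℕ) : omg d ≠ 0 := by
  intro hh
  rw [omg, Ideal.Quotient.eq_zero_iff_mem, Ideal.mem_span_singleton] at hh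
  exact not_dvd_small d X X_ne_zero (by simp) hh

open Polynomial in
lemma one_ne_zero_R (d : ℕ) : (1 : Rring d) ≠ 0 := by
  intro hh
  have : Ideal.Quotient.mk (Ideal.span {(X : Polynomial (ZMod 2)) ^ 2 + X + C (d : ZMod 2)})
      1 = 0 := hh
  rw [Ideal.Quotient.eq_zero_iff_mem, Ideal.mem_span_singleton] at this
  exact not_dvd_small d 1 one_ne_zero (by simp) this

open Polynomial in
lemma omg_ne_one (d : ℕ) : omg d ≠ 1 := by
  intro hh
  have : Ideal.Quotient.mk (Ideal.span {(X : Polynomial (ZMod 2)) ^ 2 + X + C (d : ZMod 2)})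
      (X - 1) = 0 := by
    rw [map_sub, map_one]
    show omg d - 1 = 0
    rw [hh, sub_self]
  rw [Ideal.Quotient.eq_zero_iff_mem, Ideal.mem_span_singleton] at this
  refine not_dvd_small d (X - 1) ?_ ?_ this
  · intro h0
    have := congrArg (fun q => Polynomial.coeff q 1) h0
    simp [Polynomial.coeff_one] at this
  · have : (X - 1 : Polynomial (ZMod 2)) = X - C 1 := by simp
    rw [this, natDegree_X_sub_C]

open Polynomial in
lemma one_add_omg_ne_zero (d : ℕ) : 1 + omg d ≠ 0 := by
  intro hh
  have : Ideal.Quotient.mk (Ideal.span {(X : Polynomial (ZMod 2)) ^ 2 + X + C (d : ZMod 2)})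
      (1 + X) = 0 := by
    rw [map_add, map_one]; exact hh
  rw [Ideal.Quotient.eq_zero_iff_mem, Ideal.mem_span_singleton] at this
  refine not_dvd_small d (1 + X) ?_ ?_ this
  · intro h0
    have := congrArg (fun q => Polynomial.coeff q 1) h0
    simp [Polynomial.coeff_one] at this
  · have h1 : (1 + X : Polynomial (ZMod 2)).natDegree ≤ 1 := by
      compute_degree
    exact h1

open Polynomial in
lemma mem_four (d : ℕ) (x : Rring d) :
    x = 0 ∨ x = 1 ∨ x = omg d ∨ x = 1 + omg d := by
  obtain ⟨p, rfl⟩ := Ideal.Quotient.mk_surjective x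
  set f : Polynomial (ZMod 2) := X ^ 2 + X + C (d : ZMod 2) with hf
  set r := p %ₘ f with hr
  have hmk : Ideal.Quotient.mk (Ideal.span {f}) p = Ideal.Quotient.mk (Ideal.span {f}) r := by
    rw [Ideal.Quotient.eq, Ideal.mem_span_singleton]
    exact ⟨p /ₘ f, by rw [hr]; have := Polynomial.modByMonic_add_div p f; linear_combination -this⟩
  have hdeg : r.degree ≤ 1 := by
    have h2 := Polynomial.degree_modByMonic_lt p (fpoly_monic d)
    rw [← hf] at h2
    have hfd : f.degree = 2 := by
      rw [hf]
      compute_degree!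
    rw [hfd] at h2
    exact Order.le_of_lt_succ h2
  have hrform : r = C (r.coeff 1) * X + C (r.coeff 0) :=
    Polynomial.eq_X_add_C_of_degree_le_one hdeg
  have hz : ∀ a : ZMod 2, a = 0 ∨ a = 1 := by decide
  rw [hmk, hrform]
  rcases hz (r.coeff 1) with h1 | h1 <;> rcases hz (r.coeff 0) with h0 | h0 <;>
    rw [h1, h0] <;> simp [omg, map_add, map_mul, map_one] <;>
    first
      | exact Or.inl rfl
      | (right; ring_nf; tauto)
lemma ncard_partition (d n : ℕ) (u : Fin n → Rring d) :
    {t : Fin n | u t = 0}.ncard + {t : Fin n | u t = 1}.ncard +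
      {t : Fin n | u t = omg d ∨ u t = 1 + omg d}.ncard = n := by
  classical
  set S0 := {t : Fin n | u t = 0}
  set S1 := {t : Fin n | u t = 1}
  set S2 := {t : Fin n | u t = omg d ∨ u t = 1 + omg d}
  have h01 : Disjoint S0 S1 := by
    rw [Set.disjoint_left]
    intro t h0 h1
    exact one_ne_zero_R d (h1.symm.trans h0)
  have h02 : Disjoint S0 S2 := by
    rw [Set.disjoint_left]
    intro t h0 h2
    rcases h2 with h2 | h2
    · exact omg_ne_zero d (h2.symm.trans h0)
    · exact one_add_omg_ne_zero d (h2.symm.trans h0)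
  have h12 : Disjoint S1 S2 := by
    rw [Set.disjoint_left]
    intro t h1 h2
    rcases h2 with h2 | h2
    · exact omg_ne_one d (h2.symm.trans h1)
    · apply omg_ne_zero d
      have := h2.symm.trans h1
      have h3 : omg d = 0 := by
        have h4 := congrArg (fun x => x - 1) this
        simpa using h4
      exact h3
  have hunion : S0 ∪ S1 ∪ S2 = Set.univ := by
    ext t
    simp only [Set.mem_union, Set.mem_univ, iff_true, S0, S1, S2, Set.mem_setOf_eq]
    rcases mem_four d (u t) with h | h | h | h
    · exact Or.inl (Or.inl h)
    · exact Or.inl (Or.inr h)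
    · exact Or.inr (Or.inl h)
    · exact Or.inr (Or.inr h)
  have hf0 : S0.Finite := Set.toFinite _
  have hf1 : S1.Finite := Set.toFinite _
  have hf2 : S2.Finite := Set.toFinite _
  have hcard : (S0 ∪ S1 ∪ S2).ncard = n := by
    rw [hunion, Set.ncard_univ]
    simp
  rw [Set.ncard_union_eq (Set.disjoint_union_left.mpr ⟨h02, h12⟩) (hf0.union hf1) hf2,
    Set.ncard_union_eq h01 hf0 hf1] at hcard
  exact hcard

theorem stmt8 (n : ℕ) (hn : 1 ≤ n) (ℓ : ℕ) (hℓpos : 0 < ℓ) (hsf : Squarefree ℓ)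
    (hmod : ℓ % 4 = 3) (hge : 2 * (n + 1) * (n + 2) ≤ n * (ℓ + 1)) (hnl : 4 * n < ℓ + 1)
    (d : ℕ) (hd : d = (ℓ + 1) / 4)
    (C₁ C₂ : Submodule (Rring d) (Fin n → Rring d))
    (h : MvPolynomial.aeval ![Az d, Cz d, Gz d]
           (swe n (omg d) (C₁ : Set (Fin n → Rring d))) =
         MvPolynomial.aeval ![Az d, Cz d, Gz d]
           (swe n (omg d) (C₂ : Set (Fin n → Rring d)))) :
    swe n (omg d) (C₁ : Set (Fin n → Rring d)) =
      swe n (omg d) (C₂ : Set (Fin n → Rring d)) := by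
  have hd1 : 1 ≤ d := by omega
  have hnd : n < d := by omega
  set N : Set (Fin n → Rring d) → ℕ → ℕ → ℕ → ℕ := fun Co i j k =>
    Set.ncard {u ∈ Co |
      ({t : Fin n | u t = 0}.ncard = i ∧ {t : Fin n | u t = 1}.ncard = j ∧
        {t : Fin n | u t = omg d ∨ u t = 1 + omg d}.ncard = k)} with hN
  have hexp : ∀ Co : Set (Fin n → Rring d),
      MvPolynomial.aeval ![Az d, Cz d, Gz d] (swe n (omg d) Co) =
      ∑ i ∈ Finset.range (n+1), ∑ j ∈ Finset.range (n+1), ∑ k ∈ Finset.range (n+1),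
        ((N Co i j k : ℤ) : PowerSeries ℤ) * (Az d ^ i * Cz d ^ j * Gz d ^ k) := by
    intro Co
    rw [swe, map_sum]
    refine Finset.sum_congr rfl fun i _ => ?_
    rw [map_sum]
    refine Finset.sum_congr rfl fun j _ => ?_
    rw [map_sum]
    refine Finset.sum_congr rfl fun k _ => ?_
    rw [map_mul, map_mul, map_mul, map_pow, map_pow, map_pow,
      MvPolynomial.aeval_C, MvPolynomial.aeval_X, MvPolynomial.aeval_X,
      MvPolynomial.aeval_X]
    simp only [Matrix.cons_val_zero, Matrix.cons_val_one, Matrix.head_cons, hN]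
    rw [show ((2 : Fin 3)) = (⟨2, by norm_num⟩ : Fin 3) from rfl]
    norm_num [algebraMap_int_eq, eq_intCast]
  have hempty : ∀ (Co : Set (Fin n → Rring d)) (i j k : ℕ), i + j + k ≠ n →
      N Co i j k = 0 := by
    intro Co i j k hne
    rw [hN]
    convert Set.ncard_empty (Fin n → Rring d)
    ext u
    simp only [Set.mem_setOf_eq, Set.mem_empty_iff_false, iff_false, not_and]
    rintro - h0 h1 h2
    exact hne (by rw [← h0, ← h1, ← h2]; exact ncard_partition d n u)
  have hsub : ∑ i ∈ Finset.range (n+1), ∑ j ∈ Finset.range (n+1), ∑ k ∈ Finset.range (n+1),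
      (((N (C₁ : Set (Fin n → Rring d)) i j k : ℤ)
        - (N (C₂ : Set (Fin n → Rring d)) i j k : ℤ) : ℤ) : PowerSeries ℤ)
        * (Az d ^ i * Cz d ^ j * Gz d ^ k) = 0 := by
    have h' := sub_eq_zero.mpr h
    rw [hexp (C₁ : Set (Fin n → Rring d)), hexp (C₂ : Set (Fin n → Rring d))] at h'
    rw [← h']
    rw [← Finset.sum_sub_distrib]
    refine Finset.sum_congr rfl fun i _ => ?_
    rw [← Finset.sum_sub_distrib]
    refine Finset.sum_congr rfl fun j _ => ?_
    rw [← Finset.sum_sub_distrib]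
    refine Finset.sum_congr rfl fun k _ => ?_
    push_cast
    ring
  have hkey := key_injective d n hd1 hnd
    (fun i j k => (N (C₁ : Set (Fin n → Rring d)) i j k : ℤ)
      - (N (C₂ : Set (Fin n → Rring d)) i j k : ℤ))
    (fun i j k hne => by
      rw [hempty _ _ _ _ hne, hempty _ _ _ _ hne, sub_self])
    hsub
  rw [swe, swe]
  refine Finset.sum_congr rfl fun i _ => ?_
  refine Finset.sum_congr rfl fun j _ => ?_
  refine Finset.sum_congr rfl fun k _ => ?_
  have hk := hkey i j k
  have heqN : (N (C₁ : Set (Fin n → Rring d)) i j k : ℤ)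
      = (N (C₂ : Set (Fin n → Rring d)) i j k : ℤ) := by
    linarith
  rw [hN] at heqN
  congr 1
  exact congrArg MvPolynomial.C heqN
end
end

section
/- For d = 2, the identity A₂² + C₂² + 2G₂² = (A₂ + G₂)² holds in ℤ[[q]] (equivalently C₂² + G₂² = 2A₂G₂), whereas for every even integer d > 2 one has A_d² + C_d² + 2G_d² ≠ (A_d + G_d)² in ℤ[[q]]. That is, the two homogeneous polynomials X² + Y² + 2Z² and (X + Z)² yield the same theta series at level ℓ = 7 and different theta series at every level ℓ ≡ 7 (mod 8) with ℓ > 7. -/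
noncomputable section

lemma odd_sq_ge_one (m : ℤ) : 1 ≤ (2 * m + 1) ^ 2 := by
  rcases le_or_gt 0 m with h | h <;> nlinarith

lemma one_le_sq_of_ne (n : ℤ) (h : n ≠ 0) : 1 ≤ n ^ 2 := by
  rcases lt_or_gt_of_ne h with h' | h' <;> nlinarith

lemma Qform_two_nonneg (x y : ℤ) : 0 ≤ Qform 2 x y := by
  simp only [Qform]
  push_cast
  nlinarith [sq_nonneg (2 * x + y), sq_nonneg y]

lemma finQle (c : ℤ) : {v : ℤ × ℤ | Qform 2 v.1 v.2 ≤ c}.Finite := by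
  apply Set.Finite.subset ((Set.finite_Icc (-c - 1) (c + 1)).prod (Set.finite_Icc (-c - 1) (c + 1)))
  rintro ⟨x, y⟩ h
  simp only [Set.mem_setOf_eq, Qform] at h
  push_cast at h
  constructor <;> simp only [Set.mem_Icc] <;> constructor <;>
    nlinarith [sq_nonneg (2 * x + y), sq_nonneg y, sq_nonneg (x + y), sq_nonneg x]

lemma finQeq (c : ℤ) : {v : ℤ × ℤ | Qform 2 v.1 v.2 = c}.Finite :=
  (finQle c).subset (fun v hv => le_of_eq hv)

lemma finCoset (a b c : ℤ) :
    {mn : ℤ × ℤ | Qform 2 (2 * mn.1 + a) (2 * mn.2 + b) = c}.Finite := by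
  have hinj : Function.Injective (fun mn : ℤ × ℤ => ((2 * mn.1 + a, 2 * mn.2 + b) : ℤ × ℤ)) := by
    rintro ⟨x1, x2⟩ ⟨y1, y2⟩ h
    simp only [Prod.ext_iff] at h ⊢
    omega
  have : {mn : ℤ × ℤ | Qform 2 (2 * mn.1 + a) (2 * mn.2 + b) = c} =
      (fun mn : ℤ × ℤ => ((2 * mn.1 + a, 2 * mn.2 + b) : ℤ × ℤ)) ⁻¹' {v : ℤ × ℤ | Qform 2 v.1 v.2 = c} := rfl
  rw [this]
  exact (finQeq c).preimage (hinj.injOn)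

lemma finPair (k : ℤ) :
    {p : (ℤ × ℤ) × (ℤ × ℤ) | 2 * (Qform 2 p.1.1 p.1.2 + Qform 2 p.2.1 p.2.2) = k}.Finite := by
  apply Set.Finite.subset ((finQle k).prod (finQle k))
  rintro ⟨⟨a, b⟩, ⟨c, e⟩⟩ h
  simp only [Set.mem_setOf_eq] at h ⊢
  have h1 := Qform_two_nonneg a b
  have h2 := Qform_two_nonneg c e
  exact ⟨by simp only [Set.mem_setOf_eq]; linarith, by simp only [Set.mem_setOf_eq]; linarith⟩

lemma coeff_mul_coset (a b a' b' : ℤ) (k : ℕ) :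
    (PowerSeries.coeff k) (cosetTheta 2 a b * cosetTheta 2 a' b') =
    ({p : (ℤ × ℤ) × (ℤ × ℤ) |
        Qform 2 (2 * p.1.1 + a) (2 * p.1.2 + b) +
          Qform 2 (2 * p.2.1 + a') (2 * p.2.2 + b') = (k : ℤ)}.ncard : ℤ) := by
  classical
  have hset : {p : (ℤ × ℤ) × (ℤ × ℤ) |
        Qform 2 (2 * p.1.1 + a) (2 * p.1.2 + b) +
          Qform 2 (2 * p.2.1 + a') (2 * p.2.2 + b') = (k : ℤ)} =
      ↑((Finset.HasAntidiagonal.antidiagonal k).biUnion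
        (fun ij => (finCoset a b (ij.1 : ℤ)).toFinset ×ˢ (finCoset a' b' (ij.2 : ℤ)).toFinset)) := by
    ext ⟨⟨m1, n1⟩, ⟨m2, n2⟩⟩
    simp only [Set.mem_setOf_eq, Finset.coe_biUnion, Finset.coe_sort_coe, Set.mem_iUnion,
      Finset.mem_coe, Finset.mem_product, Set.Finite.mem_toFinset, Finset.HasAntidiagonal.mem_antidiagonal,
      Subtype.exists, exists_prop, Prod.exists]
    constructor
    · intro h
      have h1 := Qform_two_nonneg (2 * m1 + a) (2 * n1 + b)
      have h2 := Qform_two_nonneg (2 * m2 + a') (2 * n2 + b')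
      refine ⟨(Qform 2 (2 * m1 + a) (2 * n1 + b)).toNat,
        (Qform 2 (2 * m2 + a') (2 * n2 + b')).toNat, by omega, by simp [Int.toNat_of_nonneg h1],
        by simp [Int.toNat_of_nonneg h2]⟩
    · rintro ⟨i, j, hij, hi, hj⟩
      rw [hi, hj, ← hij]
      push_cast
      ring
  rw [hset, Set.ncard_coe_finset]
  rw [Finset.card_biUnion]
  · rw [PowerSeries.coeff_mul]
    push_cast
    apply Finset.sum_congr rfl
    rintro ⟨i, j⟩ _
    simp only [cosetTheta, PowerSeries.coeff_mk, Finset.card_product]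
    rw [Set.ncard_eq_toFinset_card _ (finCoset a b (i : ℤ)),
      Set.ncard_eq_toFinset_card _ (finCoset a' b' (j : ℤ))]
    push_cast
    ring
  · rintro ⟨i, j⟩ hij ⟨i', j'⟩ hij' hne
    simp only [Finset.mem_coe, Finset.HasAntidiagonal.mem_antidiagonal] at hij hij'
    rw [Function.onFun, Finset.disjoint_left]
    rintro ⟨⟨m1, n1⟩, ⟨m2, n2⟩⟩ hp hq
    simp only [Finset.mem_product, Set.Finite.mem_toFinset, Set.mem_setOf_eq] at hp hq
    apply hne
    have : i = i' := by omega
    have : j = j' := by omega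
    simp_all

lemma pair_ncard_param (a b a' b' k : ℤ) :
    {p : (ℤ × ℤ) × (ℤ × ℤ) |
        Qform 2 (2 * p.1.1 + a) (2 * p.1.2 + b) +
          Qform 2 (2 * p.2.1 + a') (2 * p.2.2 + b') = k}.ncard =
    {p : (ℤ × ℤ) × (ℤ × ℤ) |
        Qform 2 p.1.1 p.1.2 + Qform 2 p.2.1 p.2.2 = k ∧
        p.1.1 % 2 = a % 2 ∧ p.1.2 % 2 = b % 2 ∧ p.2.1 % 2 = a' % 2 ∧ p.2.2 % 2 = b' % 2}.ncard := by
  have hinj : Function.Injective (fun p : (ℤ × ℤ) × (ℤ × ℤ) =>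
      (((2 * p.1.1 + a, 2 * p.1.2 + b), (2 * p.2.1 + a', 2 * p.2.2 + b')) : (ℤ × ℤ) × (ℤ × ℤ))) := by
    rintro ⟨⟨x1, x2⟩, ⟨x3, x4⟩⟩ ⟨⟨y1, y2⟩, ⟨y3, y4⟩⟩ h
    simp only [Prod.ext_iff] at h ⊢
    omega
  rw [← Set.ncard_image_of_injective _ hinj]
  congr 1
  ext ⟨⟨x1, x2⟩, ⟨x3, x4⟩⟩
  simp only [Set.mem_image, Set.mem_setOf_eq, Prod.ext_iff]
  constructor
  · rintro ⟨⟨⟨m1, n1⟩, ⟨m2, n2⟩⟩, hQ, ⟨⟨e1, e2⟩, e3, e4⟩⟩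
    simp only at e1 e2 e3 e4
    refine ⟨?_, by omega, by omega, by omega, by omega⟩
    rw [← e1, ← e2, ← e3, ← e4]
    exact hQ
  · rintro ⟨hQ, p1, p2, p3, p4⟩
    obtain ⟨m1, hm1⟩ : ∃ t, x1 = 2 * t + a := ⟨(x1 - a) / 2, by omega⟩
    obtain ⟨n1, hn1⟩ : ∃ t, x2 = 2 * t + b := ⟨(x2 - b) / 2, by omega⟩
    obtain ⟨m2, hm2⟩ : ∃ t, x3 = 2 * t + a' := ⟨(x3 - a') / 2, by omega⟩
    obtain ⟨n2, hn2⟩ : ∃ t, x4 = 2 * t + b' := ⟨(x4 - b') / 2, by omega⟩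
    refine ⟨((m1, n1), (m2, n2)), ?_, by constructor <;> constructor <;> simp <;> omega⟩
    simp only [Set.mem_setOf_eq]
    rw [← hm1, ← hn1, ← hm2, ← hn2]
    exact hQ

lemma count_key (k : ℤ) :
    {p : (ℤ × ℤ) × (ℤ × ℤ) |
        Qform 2 p.1.1 p.1.2 + Qform 2 p.2.1 p.2.2 = k ∧
        p.1.1 % 2 = 1 ∧ p.1.2 % 2 = 0 ∧ p.2.1 % 2 = 1 ∧ p.2.2 % 2 = 0}.ncard +
    {p : (ℤ × ℤ) × (ℤ × ℤ) |
        Qform 2 p.1.1 p.1.2 + Qform 2 p.2.1 p.2.2 = k ∧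
        p.1.1 % 2 = 0 ∧ p.1.2 % 2 = 1 ∧ p.2.1 % 2 = 0 ∧ p.2.2 % 2 = 1}.ncard =
    {p : (ℤ × ℤ) × (ℤ × ℤ) |
        Qform 2 p.1.1 p.1.2 + Qform 2 p.2.1 p.2.2 = k ∧
        p.1.1 % 2 = 0 ∧ p.1.2 % 2 = 0 ∧ p.2.1 % 2 = 0 ∧ p.2.2 % 2 = 1}.ncard +
    {p : (ℤ × ℤ) × (ℤ × ℤ) |
        Qform 2 p.1.1 p.1.2 + Qform 2 p.2.1 p.2.2 = k ∧
        p.1.1 % 2 = 0 ∧ p.1.2 % 2 = 0 ∧ p.2.1 % 2 = 0 ∧ p.2.2 % 2 = 1}.ncard := by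
  set U : Set ((ℤ × ℤ) × (ℤ × ℤ)) := {p |
      2 * (Qform 2 p.1.1 p.1.2 + Qform 2 p.2.1 p.2.2) = k ∧
      (p.1.1 + p.2.1) % 2 = 1 ∧ (p.1.2 + p.2.2) % 2 = 0} with hUdef
  set V : Set ((ℤ × ℤ) × (ℤ × ℤ)) := {p |
      2 * (Qform 2 p.1.1 p.1.2 + Qform 2 p.2.1 p.2.2) = k ∧
      (p.1.1 + p.2.1) % 2 = 0 ∧ (p.1.2 + p.2.2) % 2 = 1} with hVdef
  set W : Set ((ℤ × ℤ) × (ℤ × ℤ)) := {p |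
      2 * (Qform 2 p.1.1 p.1.2 + Qform 2 p.2.1 p.2.2) = k ∧
      (p.1.1 + p.1.2) % 2 = 0 ∧ (p.2.1 + p.2.2) % 2 = 1} with hWdef
  set W2 : Set ((ℤ × ℤ) × (ℤ × ℤ)) := {p |
      2 * (Qform 2 p.2.1 p.2.2 + Qform 2 p.1.1 p.1.2) = k ∧
      (p.2.1 + p.2.2) % 2 = 0 ∧ (p.1.1 + p.1.2) % 2 = 1} with hW2def
  -- the "sum/difference" map
  have hPinj : Function.Injective (fun p : (ℤ × ℤ) × (ℤ × ℤ) =>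
      (((p.1.1 + p.2.1, p.1.2 + p.2.2), (p.1.1 - p.2.1, p.1.2 - p.2.2)) : (ℤ × ℤ) × (ℤ × ℤ))) := by
    rintro ⟨⟨x1, x2⟩, ⟨x3, x4⟩⟩ ⟨⟨y1, y2⟩, ⟨y3, y4⟩⟩ h
    simp only [Prod.ext_iff] at h ⊢
    omega
  -- multiplication by ω
  have hMinj : Function.Injective (fun p : (ℤ × ℤ) × (ℤ × ℤ) =>
      (((-2 * p.1.2, p.1.1 + p.1.2), (-2 * p.2.2, p.2.1 + p.2.2)) : (ℤ × ℤ) × (ℤ × ℤ))) := by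
    rintro ⟨⟨x1, x2⟩, ⟨x3, x4⟩⟩ ⟨⟨y1, y2⟩, ⟨y3, y4⟩⟩ h
    simp only [Prod.ext_iff] at h ⊢
    omega
  have hSinj : Function.Injective (fun p : (ℤ × ℤ) × (ℤ × ℤ) => (p.2, p.1)) := by
    rintro ⟨⟨x1, x2⟩, ⟨x3, x4⟩⟩ ⟨⟨y1, y2⟩, ⟨y3, y4⟩⟩ h
    simp only [Prod.ext_iff] at h ⊢
    tauto
  have hX : (fun p : (ℤ × ℤ) × (ℤ × ℤ) =>
      (((p.1.1 + p.2.1, p.1.2 + p.2.2), (p.1.1 - p.2.1, p.1.2 - p.2.2)) : (ℤ × ℤ) × (ℤ × ℤ))) '' U =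
      {p : (ℤ × ℤ) × (ℤ × ℤ) |
        Qform 2 p.1.1 p.1.2 + Qform 2 p.2.1 p.2.2 = k ∧
        p.1.1 % 2 = 1 ∧ p.1.2 % 2 = 0 ∧ p.2.1 % 2 = 1 ∧ p.2.2 % 2 = 0} := by
    ext ⟨⟨a, b⟩, ⟨c, e⟩⟩
    simp only [hUdef, Set.mem_image, Set.mem_setOf_eq, Prod.ext_iff]
    constructor
    · rintro ⟨⟨⟨m1, n1⟩, ⟨m2, n2⟩⟩, ⟨hQ, h1, h2⟩, ⟨⟨e1, e2⟩, e3, e4⟩⟩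
      simp only at e1 e2 e3 e4 h1 h2 hQ
      refine ⟨?_, by omega, by omega, by omega, by omega⟩
      rw [← e1, ← e2, ← e3, ← e4]
      simp only [Qform] at hQ ⊢
      push_cast at hQ ⊢
      linear_combination hQ
    · rintro ⟨hQ, p1, p2, p3, p4⟩
      obtain ⟨m1, hm1⟩ : ∃ t, a + c = 2 * t := ⟨(a + c) / 2, by omega⟩
      obtain ⟨n1, hn1⟩ : ∃ t, b + e = 2 * t := ⟨(b + e) / 2, by omega⟩
      obtain ⟨m2, hm2⟩ : ∃ t, a - c = 2 * t := ⟨(a - c) / 2, by omega⟩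
      obtain ⟨n2, hn2⟩ : ∃ t, b - e = 2 * t := ⟨(b - e) / 2, by omega⟩
      have ha : a = m1 + m2 := by omega
      have hb : b = n1 + n2 := by omega
      have hc : c = m1 - m2 := by omega
      have he : e = n1 - n2 := by omega
      refine ⟨((m1, n1), (m2, n2)), ⟨?_, show (m1 + m2) % 2 = 1 by omega,
        show (n1 + n2) % 2 = 0 by omega⟩, by simp <;> omega⟩
      rw [ha, hb, hc, he] at hQ
      simp only [Qform] at hQ ⊢
      push_cast at hQ ⊢
      linear_combination hQ
  have hY : (fun p : (ℤ × ℤ) × (ℤ × ℤ) =>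
      (((p.1.1 + p.2.1, p.1.2 + p.2.2), (p.1.1 - p.2.1, p.1.2 - p.2.2)) : (ℤ × ℤ) × (ℤ × ℤ))) '' V =
      {p : (ℤ × ℤ) × (ℤ × ℤ) |
        Qform 2 p.1.1 p.1.2 + Qform 2 p.2.1 p.2.2 = k ∧
        p.1.1 % 2 = 0 ∧ p.1.2 % 2 = 1 ∧ p.2.1 % 2 = 0 ∧ p.2.2 % 2 = 1} := by
    ext ⟨⟨a, b⟩, ⟨c, e⟩⟩
    simp only [hVdef, Set.mem_image, Set.mem_setOf_eq, Prod.ext_iff]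
    constructor
    · rintro ⟨⟨⟨m1, n1⟩, ⟨m2, n2⟩⟩, ⟨hQ, h1, h2⟩, ⟨⟨e1, e2⟩, e3, e4⟩⟩
      simp only at e1 e2 e3 e4 h1 h2 hQ
      refine ⟨?_, by omega, by omega, by omega, by omega⟩
      rw [← e1, ← e2, ← e3, ← e4]
      simp only [Qform] at hQ ⊢
      push_cast at hQ ⊢
      linear_combination hQ
    · rintro ⟨hQ, p1, p2, p3, p4⟩
      obtain ⟨m1, hm1⟩ : ∃ t, a + c = 2 * t := ⟨(a + c) / 2, by omega⟩
      obtain ⟨n1, hn1⟩ : ∃ t, b + e = 2 * t := ⟨(b + e) / 2, by omega⟩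
      obtain ⟨m2, hm2⟩ : ∃ t, a - c = 2 * t := ⟨(a - c) / 2, by omega⟩
      obtain ⟨n2, hn2⟩ : ∃ t, b - e = 2 * t := ⟨(b - e) / 2, by omega⟩
      have ha : a = m1 + m2 := by omega
      have hb : b = n1 + n2 := by omega
      have hc : c = m1 - m2 := by omega
      have he : e = n1 - n2 := by omega
      refine ⟨((m1, n1), (m2, n2)), ⟨?_, show (m1 + m2) % 2 = 0 by omega,
        show (n1 + n2) % 2 = 1 by omega⟩, by simp <;> omega⟩
      rw [ha, hb, hc, he] at hQ
      simp only [Qform] at hQ ⊢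
      push_cast at hQ ⊢
      linear_combination hQ
  have hZ : (fun p : (ℤ × ℤ) × (ℤ × ℤ) =>
      (((-2 * p.1.2, p.1.1 + p.1.2), (-2 * p.2.2, p.2.1 + p.2.2)) : (ℤ × ℤ) × (ℤ × ℤ))) '' W =
      {p : (ℤ × ℤ) × (ℤ × ℤ) |
        Qform 2 p.1.1 p.1.2 + Qform 2 p.2.1 p.2.2 = k ∧
        p.1.1 % 2 = 0 ∧ p.1.2 % 2 = 0 ∧ p.2.1 % 2 = 0 ∧ p.2.2 % 2 = 1} := by
    ext ⟨⟨a, b⟩, ⟨c, e⟩⟩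
    simp only [hWdef, Set.mem_image, Set.mem_setOf_eq, Prod.ext_iff]
    constructor
    · rintro ⟨⟨⟨m1, n1⟩, ⟨m2, n2⟩⟩, ⟨hQ, h1, h2⟩, ⟨⟨e1, e2⟩, e3, e4⟩⟩
      simp only at e1 e2 e3 e4 h1 h2 hQ
      refine ⟨?_, by omega, by omega, by omega, by omega⟩
      rw [← e1, ← e2, ← e3, ← e4]
      simp only [Qform] at hQ ⊢
      push_cast at hQ ⊢
      linear_combination hQ
    · rintro ⟨hQ, p1, p2, p3, p4⟩
      obtain ⟨v1, hv1⟩ : ∃ t, a = -2 * t := ⟨-(a / 2), by omega⟩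
      obtain ⟨v2, hv2⟩ : ∃ t, c = -2 * t := ⟨-(c / 2), by omega⟩
      refine ⟨((b - v1, v1), (e - v2, v2)), ⟨?_, show (b - v1 + v1) % 2 = 0 by omega,
        show (e - v2 + v2) % 2 = 1 by omega⟩, by simp <;> omega⟩
      rw [hv1, hv2] at hQ
      simp only [Qform] at hQ ⊢
      push_cast at hQ ⊢
      linear_combination hQ
  have hW2 : (fun p : (ℤ × ℤ) × (ℤ × ℤ) => (p.2, p.1)) '' W = W2 := by
    ext ⟨⟨a, b⟩, ⟨c, e⟩⟩
    simp only [hWdef, hW2def, Set.mem_image, Set.mem_setOf_eq, Prod.ext_iff]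
    constructor
    · rintro ⟨⟨⟨m1, n1⟩, ⟨m2, n2⟩⟩, ⟨hQ, h1, h2⟩, ⟨⟨e1, e2⟩, e3, e4⟩⟩
      simp only at e1 e2 e3 e4 h1 h2 hQ
      subst e1; subst e2; subst e3; subst e4
      exact ⟨hQ, h1, h2⟩
    · rintro ⟨hQ, h1, h2⟩
      exact ⟨((c, e), (a, b)), ⟨hQ, h1, h2⟩, ⟨⟨rfl, rfl⟩, rfl, rfl⟩⟩
  have hunion : U ∪ V = W ∪ W2 := by
    ext ⟨⟨a, b⟩, ⟨c, e⟩⟩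
    simp only [hUdef, hVdef, hWdef, hW2def, Set.mem_union, Set.mem_setOf_eq]
    generalize Qform 2 a b = P
    generalize Qform 2 c e = R
    omega
  have hdisjUV : Disjoint U V := by
    rw [Set.disjoint_left]
    rintro ⟨⟨a, b⟩, ⟨c, e⟩⟩ hp hq
    simp only [hUdef, hVdef, Set.mem_setOf_eq] at hp hq
    omega
  have hdisjW : Disjoint W W2 := by
    rw [Set.disjoint_left]
    rintro ⟨⟨a, b⟩, ⟨c, e⟩⟩ hp hq
    simp only [hWdef, hW2def, Set.mem_setOf_eq] at hp hq
    omega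
  have hfinU : U.Finite := (finPair k).subset (fun p hp => hp.1)
  have hfinV : V.Finite := (finPair k).subset (fun p hp => hp.1)
  have hfinW : W.Finite := (finPair k).subset (fun p hp => hp.1)
  have hfinW2 : W2.Finite := (finPair k).subset (fun p hp => by
    have := hp.1
    simp only [Set.mem_setOf_eq] at this ⊢
    linarith)
  rw [← hX, ← hY, ← hZ]
  rw [Set.ncard_image_of_injective _ hPinj, Set.ncard_image_of_injective _ hPinj,
    Set.ncard_image_of_injective _ hMinj]
  have h1 : U.ncard + V.ncard = (U ∪ V).ncard := (Set.ncard_union_eq hdisjUV hfinU hfinV).symm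
  have h2 : (W ∪ W2).ncard = W.ncard + W2.ncard := Set.ncard_union_eq hdisjW hfinW hfinW2
  have h3 : W2.ncard = W.ncard := by rw [← hW2, Set.ncard_image_of_injective _ hSinj]
  rw [h1, hunion, h2, h3]

lemma serieskey : Cz 2 * Cz 2 + Gz 2 * Gz 2 = Az 2 * Gz 2 + Az 2 * Gz 2 := by
  apply PowerSeries.ext
  intro k
  simp only [map_add, Az, Cz, Gz]
  rw [coeff_mul_coset, coeff_mul_coset, coeff_mul_coset]
  rw [pair_ncard_param, pair_ncard_param, pair_ncard_param]
  simp only [show (1 : ℤ) % 2 = 1 from rfl, show (0 : ℤ) % 2 = 0 from rfl]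
  exact_mod_cast congrArg (fun n : ℕ => (n : ℤ)) (count_key (k : ℤ))

lemma Gz_coeff_small (d : ℕ) (hd : 2 < d) (k : ℕ) (hk : k ≤ 2) :
    PowerSeries.coeff k (Gz d) = 0 := by
  have hd3 : (3 : ℤ) ≤ (d : ℤ) := by exact_mod_cast hd
  have hk' : ((k : ℤ)) ≤ 2 := by exact_mod_cast hk
  simp only [Gz, cosetTheta, PowerSeries.coeff_mk]
  rw [show {mn : ℤ × ℤ | Qform d (2 * mn.1 + 0) (2 * mn.2 + 1) = (k : ℤ)} = (∅ : Set (ℤ × ℤ)) by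
    apply Set.eq_empty_iff_forall_notMem.mpr
    rintro ⟨m, n⟩ h
    simp only [Set.mem_setOf_eq, Qform] at h
    push_cast at h
    nlinarith [sq_nonneg (4 * m + 2 * n + 1), odd_sq_ge_one n, hd3, hk']]
  simp

lemma Cz_coeff_even (d : ℕ) (hd : 2 < d) (k : ℕ) (hk : k = 0 ∨ k = 2) :
    PowerSeries.coeff k (Cz d) = 0 := by
  have hd3 : (3 : ℤ) ≤ (d : ℤ) := by exact_mod_cast hd
  simp only [Cz, cosetTheta, PowerSeries.coeff_mk]
  rw [show {mn : ℤ × ℤ | Qform d (2 * mn.1 + 1) (2 * mn.2 + 0) = (k : ℤ)} = (∅ : Set (ℤ × ℤ)) by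
    apply Set.eq_empty_iff_forall_notMem.mpr
    rintro ⟨m, n⟩ h
    simp only [Set.mem_setOf_eq, Qform] at h
    push_cast at h
    have hk' : ((k : ℤ)) = 0 ∨ ((k : ℤ)) = 2 := by rcases hk with rfl | rfl <;> simp
    rcases eq_or_ne n 0 with rfl | hn
    · have h4 : 4 * (m * (m + 1)) = (k : ℤ) - 1 := by linear_combination h
      obtain ⟨t, ht⟩ := Int.even_mul_succ_self m
      rw [ht] at h4
      rcases hk' with h2 | h2 <;> omega
    · rcases hk' with h2 | h2 <;> rw [h2] at h <;>
        nlinarith [one_le_sq_of_ne n hn, sq_nonneg (4 * m + 2 * n + 2), hd3]]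
  simp

lemma Cz_coeff_one (d : ℕ) (hd : 2 < d) :
    PowerSeries.coeff 1 (Cz d) = 2 := by
  have hd3 : (3 : ℤ) ≤ (d : ℤ) := by exact_mod_cast hd
  simp only [Cz, cosetTheta, PowerSeries.coeff_mk]
  rw [show {mn : ℤ × ℤ | Qform d (2 * mn.1 + 1) (2 * mn.2 + 0) = ((1 : ℕ) : ℤ)} =
      ({((0 : ℤ), (0 : ℤ)), ((-1 : ℤ), (0 : ℤ))} : Set (ℤ × ℤ)) by
    ext ⟨m, n⟩
    simp only [Set.mem_setOf_eq, Set.mem_insert_iff, Set.mem_singleton_iff, Prod.mk.injEq]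
    constructor
    · intro h
      simp only [Qform] at h
      push_cast at h
      have hn : n = 0 := by
        by_contra hn
        nlinarith [one_le_sq_of_ne n hn, sq_nonneg (4 * m + 2 * n + 2), hd3]
      subst hn
      have h4 : m * (m + 1) = 0 := by
        have h5 : 4 * (m * (m + 1)) = 0 := by linear_combination h
        linarith
      rcases mul_eq_zero.mp h4 with h5 | h5
      · exact Or.inl ⟨h5, rfl⟩
      · exact Or.inr ⟨by omega, rfl⟩
    · rintro (⟨rfl, rfl⟩ | ⟨rfl, rfl⟩) <;> norm_num [Qform]]
  rw [Set.ncard_pair (by decide : ((0 : ℤ), (0 : ℤ)) ≠ ((-1 : ℤ), (0 : ℤ)))]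
  norm_num

theorem stmt10 :
    (Az 2 ^ 2 + Cz 2 ^ 2 + 2 * Gz 2 ^ 2 = (Az 2 + Gz 2) ^ 2) ∧
    (∀ d : ℕ, 2 < d → Even d →
      Az d ^ 2 + Cz d ^ 2 + 2 * Gz d ^ 2 ≠ (Az d + Gz d) ^ 2) := by
  constructor
  · linear_combination serieskey
  · intro d hd _ h
    have key2 : Cz d * Cz d + Gz d * Gz d = Az d * Gz d + Az d * Gz d := by
      linear_combination h
    have hc := congrArg (PowerSeries.coeff 2) key2
    simp only [map_add, PowerSeries.coeff_mul,
      Finset.Nat.sum_antidiagonal_eq_sum_range_succ_mk, Finset.sum_range_succ,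
      Finset.sum_range_zero] at hc
    norm_num [Cz_coeff_one d hd, Cz_coeff_even d hd 0 (Or.inl rfl),
      Cz_coeff_even d hd 2 (Or.inr rfl), Gz_coeff_small d hd 0 (by norm_num),
      Gz_coeff_small d hd 1 (by norm_num), Gz_coeff_small d hd 2 (by norm_num)] at hc
end
end
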